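/- arXiv:2404.05771 — 2 statements merged into one kernel-verified Lean document; each statement's English description precedes it below -/
import Mathlib

section
/- Let n be a positive integer that is an odd square, divisible by 5, with σ(n)/n = 9/5. If q₄ is the fourth smallest prime divisor of n, then q₄ < p_{⌈390ω(n)/47⌉}, where p_k is the k-th prime. -/
open ArithmeticFunction Finset
open scoped ArithmeticFunction.sigma

private lemma ratio_anti {a b : ℕ} (h2 : 2 ≤ a) (hab : a ≤ b) :
    (b : ℚ) / (b - 1) ≤ (a : ℚ) / (a - 1) := by
  have ha : (2:ℚ) ≤ a := by exact_mod_cast h2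
  have hab' : (a:ℚ) ≤ b := by exact_mod_cast hab
  rw [div_le_div_iff₀ (by linarith) (by linarith)]
  nlinarith

private lemma abund_mono {m n : ℕ} (hm : 0 < m) (hn : 0 < n) (hmn : m ∣ n) :
    (σ 1 m : ℚ) / m ≤ (σ 1 n : ℚ) / n := by
  obtain ⟨c, rfl⟩ := hmn
  have hc : 0 < c := by
    rcases Nat.eq_zero_or_pos c with rfl | h
    · simp at hn
    · exact h
  have key : σ 1 m * c ≤ σ 1 (m * c) := by
    rw [sigma_one_apply, sigma_one_apply, Finset.sum_mul]
    calc ∑ d ∈ m.divisors, d * c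
        = ∑ d ∈ m.divisors.image (· * c), d := by
          rw [Finset.sum_image]
          intro x _ y _ h
          exact Nat.eq_of_mul_eq_mul_right hc h
      _ ≤ ∑ d ∈ (m*c).divisors, d := by
          apply Finset.sum_le_sum_of_subset
          intro x hx
          simp only [Finset.mem_image] at hx
          obtain ⟨d, hd, rfl⟩ := hx
          rw [Nat.mem_divisors] at hd ⊢
          exact ⟨mul_dvd_mul hd.1 dvd_rfl, by positivity⟩
  rw [div_le_div_iff₀ (by exact_mod_cast hm) (by exact_mod_cast hn)]
  have key' : (σ 1 m : ℚ) * c ≤ (σ 1 (m * c) : ℚ) := by exact_mod_cast key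
  have hm' : (0:ℚ) ≤ m := by positivity
  push_cast
  nlinarith

private lemma telescope (t : ℕ) : ∀ (T : Finset ℕ) (K : ℕ), T.card = t → 1 ≤ K →
    (∀ p ∈ T, K + 1 ≤ p) →
    ∏ p ∈ T, (p : ℚ) / (p - 1) ≤ ((K : ℚ) + t) / K := by
  induction t with
  | zero =>
    intro T K hc hK _
    rw [Finset.card_eq_zero.mp hc]
    have : (K:ℚ) ≠ 0 := by positivity
    simp [div_self this]
  | succ t ih =>
    intro T K hc hK hmem
    have hne : T.Nonempty := Finset.card_pos.mp (by omega)
    set m := T.min' hne with hm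
    have hmT : m ∈ T := T.min'_mem hne
    have hmK : K + 1 ≤ m := hmem m hmT
    have hcard : (T.erase m).card = t := by rw [Finset.card_erase_of_mem hmT]; omega
    have hrest := ih (T.erase m) (K + 1) hcard (by omega) ?_
    · have hKQ : (0:ℚ) < K := by exact_mod_cast hK
      have hm2 : (2:ℕ) ≤ K + 1 := by omega
      have h1 : (m : ℚ) / (m - 1) ≤ ((K:ℚ) + 1) / K := by
        have := ratio_anti hm2 hmK
        push_cast at this
        convert this using 2 <;> push_cast <;> ring
      have hnn : (0:ℚ) ≤ ∏ p ∈ T.erase m, (p : ℚ) / (p - 1) := by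
        apply Finset.prod_nonneg
        intro p hp
        have : K + 2 ≤ p := by
          have h1 := T.min'_le p (Finset.mem_of_mem_erase hp)
          have h2 := Finset.ne_of_mem_erase hp
          omega
        have : (2:ℚ) ≤ p := by exact_mod_cast (by omega : 2 ≤ p)
        apply div_nonneg <;> linarith
      calc ∏ p ∈ T, (p : ℚ) / (p - 1)
          = (m : ℚ) / (m - 1) * ∏ p ∈ T.erase m, (p : ℚ) / (p - 1) :=
            (Finset.mul_prod_erase T _ hmT).symm
        _ ≤ (((K:ℚ) + 1) / K) * ((((K:ℚ) + 1) + t) / (K + 1)) := by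
            apply mul_le_mul h1 ?_ hnn (by positivity)
            have := hrest
            push_cast at this ⊢
            linarith
        _ = ((K : ℚ) + (t + 1)) / K := by field_simp; ring
        _ = ((K : ℚ) + ((t:ℕ) + 1 : ℕ)) / K := by push_cast; ring
    · intro p hp
      have h1 := T.min'_le p (Finset.mem_of_mem_erase hp)
      have h2 := Finset.ne_of_mem_erase hp
      omega

private lemma small3 (S : Finset ℕ) (hcard : S.card = 3)
    (h : ∀ p ∈ S, p.Prime ∧ Odd p ∧ p ≠ 3) :
    ∏ p ∈ S, (p : ℚ) / (p - 1) ≤ 77 / 48 := by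
  have hne : S.Nonempty := Finset.card_pos.mp (by omega)
  set a := S.min' hne with ha
  have haS : a ∈ S := S.min'_mem hne
  obtain ⟨hap, ⟨a', ha'⟩, ha3⟩ := h a haS
  have ha5 : 5 ≤ a := by have := hap.two_le; omega
  have hc2 : (S.erase a).card = 2 := by rw [Finset.card_erase_of_mem haS]; omega
  have hne2 : (S.erase a).Nonempty := Finset.card_pos.mp (by omega)
  set b := (S.erase a).min' hne2 with hb
  have hbS' : b ∈ S.erase a := (S.erase a).min'_mem hne2
  have hbS : b ∈ S := Finset.mem_of_mem_erase hbS'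
  obtain ⟨hbp, ⟨b', hb'⟩, hb3⟩ := h b hbS
  have hab : a ≤ b := S.min'_le b hbS
  have hb7 : 7 ≤ b := by have := Finset.ne_of_mem_erase hbS'; omega
  have hc1 : ((S.erase a).erase b).card = 1 := by rw [Finset.card_erase_of_mem hbS']; omega
  obtain ⟨c, hc⟩ := Finset.card_eq_one.mp hc1
  have hcS'' : c ∈ (S.erase a).erase b := by rw [hc]; exact Finset.mem_singleton_self c
  have hcS' : c ∈ S.erase a := Finset.mem_of_mem_erase hcS''
  have hcS : c ∈ S := Finset.mem_of_mem_erase hcS'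
  obtain ⟨hcp, ⟨c', hc'⟩, hc3⟩ := h c hcS
  have hbc : b ≤ c := (S.erase a).min'_le c hcS'
  have hc9 : c ≠ 9 := by rintro rfl; exact absurd hcp (by decide)
  have hc11 : 11 ≤ c := by have := Finset.ne_of_mem_erase hcS''; omega
  have e1 : (a : ℚ) / (a - 1) ≤ 5 / 4 := by
    have := ratio_anti (show 2 ≤ 5 by norm_num) ha5; push_cast at this; linarith
  have e2 : (b : ℚ) / (b - 1) ≤ 7 / 6 := by
    have := ratio_anti (show 2 ≤ 7 by norm_num) hb7; push_cast at this; linarith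
  have e3 : (c : ℚ) / (c - 1) ≤ 11 / 10 := by
    have := ratio_anti (show 2 ≤ 11 by norm_num) hc11; push_cast at this; linarith
  have p3 : (0:ℚ) ≤ (c : ℚ) / (c - 1) := by
    have : (11:ℚ) ≤ c := by exact_mod_cast hc11
    apply div_nonneg <;> linarith
  have p2 : (0:ℚ) ≤ (b : ℚ) / (b - 1) := by
    have : (7:ℚ) ≤ b := by exact_mod_cast hb7
    apply div_nonneg <;> linarith
  calc ∏ p ∈ S, (p : ℚ) / (p - 1)
      = (a : ℚ) / (a - 1) * ((b : ℚ) / (b - 1) * ((c : ℚ) / (c - 1))) := by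
        rw [← Finset.mul_prod_erase S _ haS, ← Finset.mul_prod_erase _ _ hbS', hc,
          Finset.prod_singleton]
    _ ≤ 5 / 4 * (7 / 6 * (11 / 10)) := by
        apply mul_le_mul e1 ?_ (by positivity) (by norm_num)
        apply mul_le_mul e2 e3 p3 (by norm_num)
    _ ≤ 77 / 48 := by norm_num

private lemma local_factor_lt {p k : ℕ} (hp : p.Prime) :
    (σ 1 (p ^ k) : ℚ) / (p ^ k) < (p : ℚ) / (p - 1) := by
  have h2 : (2:ℚ) ≤ p := by exact_mod_cast hp.two_le
  have hgeo : (σ 1 (p ^ k) : ℚ) = ∑ i ∈ Finset.range (k + 1), (p : ℚ) ^ i := by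
    rw [sigma_one_apply_prime_pow hp]; push_cast; rfl
  rw [hgeo, div_lt_div_iff₀ (by positivity) (by linarith)]
  have hgs := geom_sum_mul (x := (p : ℚ)) (n := k + 1)
  rw [hgs]
  have : (p : ℚ) ^ (k + 1) = p * p ^ k := by ring
  linarith

private lemma sigma_ratio_pos {p k : ℕ} (hp : p.Prime) :
    (0:ℚ) < (σ 1 (p ^ k) : ℚ) / (p ^ k) := by
  have h2 : (2:ℚ) ≤ p := by exact_mod_cast hp.two_le
  apply div_pos ?_ (by positivity)
  have : 0 < σ 1 (p ^ k) := by
    rw [sigma_one_apply]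
    apply Finset.sum_pos (fun d hd => Nat.pos_of_mem_divisors hd)
    exact ⟨1, Nat.one_mem_divisors.mpr (pow_ne_zero _ hp.ne_zero)⟩
  exact_mod_cast this

private lemma not_three_dvd (n : ℕ) (hn : 0 < n) (hodd : Odd n) (hsq : IsSquare n)
    (h5 : 5 ∣ n) (habund : (σ 1 n : ℚ) / n = 9 / 5) : ¬ 3 ∣ n := by
  intro h3
  have hn0 : n ≠ 0 := hn.ne'
  obtain ⟨k, hk⟩ := hsq
  have hk0 : k ≠ 0 := by rintro rfl; simp at hk; omega
  have heq : 5 * σ 1 n = 9 * n := by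
    have hnq : (n : ℚ) ≠ 0 := by exact_mod_cast hn0
    rw [div_eq_div_iff hnq (by norm_num)] at habund
    have : ((5 * σ 1 n : ℕ) : ℚ) = ((9 * n : ℕ) : ℚ) := by push_cast; linarith
    exact_mod_cast this
  have hsq2 : ∀ p : ℕ, p.Prime → p ∣ n → p * p ∣ n := by
    intro p pp pd
    rw [hk] at pd ⊢
    rcases (Nat.Prime.dvd_mul pp).mp pd with h | h
    · exact mul_dvd_mul h h
    · exact mul_dvd_mul h h
  have h9 : 9 ∣ n := hsq2 3 Nat.prime_three h3
  have h25 : 25 ∣ n := hsq2 5 (by norm_num) h5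
  by_cases h27 : 27 ∣ n
  · -- 81 ∣ n
    have h81 : 81 ∣ n := by
      have h3k : 3 ∣ k := by
        have h3n : (3:ℕ) ∣ k * k := hk ▸ h3
        rcases (Nat.Prime.dvd_mul Nat.prime_three).mp h3n with h | h
        · exact h
        · exact h
      obtain ⟨j, hj⟩ := h3k
      have h3j : 3 ∣ j := by
        obtain ⟨x, hx⟩ := h27
        have : j * j = 3 * x := by
          have h9a : n = 9 * (j * j) := by rw [hk, hj]; ring
          have h9b : 9 * (j * j) = 9 * (3 * x) := by rw [← h9a, hx]; ring
          exact Nat.eq_of_mul_eq_mul_left (by norm_num) h9b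
        rcases (Nat.Prime.dvd_mul Nat.prime_three).mp ⟨x, this⟩ with h | h
        · exact h
        · exact h
      obtain ⟨i, hi⟩ := h3j
      exact ⟨i * i, by rw [hk, hj, hi]; ring⟩
    have h2025 : 2025 ∣ n := by
      have : (81 * 25 : ℕ) ∣ n := (Nat.Coprime.mul_dvd_of_dvd_of_dvd (by decide) h81 h25)
      simpa using this
    have hmono := abund_mono (m := 2025) (by norm_num) hn h2025
    rw [habund] at hmono
    have hval : σ 1 2025 = 3751 := by
      have : (2025 : ℕ) = 81 * 25 := by norm_num
      rw [this, isMultiplicative_sigma.map_mul_of_coprime (by decide)]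
      have s81 : σ 1 81 = 121 := by decide
      have s25 : σ 1 25 = 31 := by decide
      rw [s81, s25]; norm_num
    rw [hval] at hmono
    norm_num at hmono
  · -- 9 ‖ n
    have hnt : n = 9 * (n / 9) := (Nat.mul_div_cancel' h9).symm
    set t := n / 9 with ht
    have h3t : ¬ 3 ∣ t := by
      intro hd
      obtain ⟨u, hu⟩ := hd
      exact h27 ⟨u, by rw [hnt, hu]; ring⟩
    have hcop : Nat.Coprime 9 t := by
      have h1 : Nat.Coprime 3 t := (Nat.Prime.coprime_iff_not_dvd Nat.prime_three).mpr h3t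
      have := Nat.Coprime.pow_left 2 h1
      simpa using this
    have hs : σ 1 n = 13 * σ 1 t := by
      rw [hnt, isMultiplicative_sigma.map_mul_of_coprime hcop]
      have s9 : σ 1 9 = 13 := by decide
      rw [s9]
    have h13 : (13 : ℕ) ∣ n := by
      have hd : (13 : ℕ) ∣ 9 * n := by
        have h65 : 9 * n = 65 * σ 1 t := by rw [← heq, hs]; ring
        exact ⟨5 * σ 1 t, by rw [h65]; ring⟩
      rcases (Nat.Prime.dvd_mul (by norm_num)).mp hd with h | h
      · norm_num at h
      · exact h
    have h169 : 169 ∣ n := hsq2 13 (by norm_num) h13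
    have h38025 : 38025 ∣ n := by
      have h225 : (225 : ℕ) ∣ n := by
        have : (9 * 25 : ℕ) ∣ n := Nat.Coprime.mul_dvd_of_dvd_of_dvd (by decide) h9 h25
        simpa using this
      have : (225 * 169 : ℕ) ∣ n := Nat.Coprime.mul_dvd_of_dvd_of_dvd (by decide) h225 h169
      simpa using this
    have hmono := abund_mono (m := 38025) (by norm_num) hn h38025
    rw [habund] at hmono
    have hval : σ 1 38025 = 73749 := by
      have e1 : (38025 : ℕ) = 225 * 169 := by norm_num
      have e2 : (225 : ℕ) = 9 * 25 := by norm_num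
      rw [e1, isMultiplicative_sigma.map_mul_of_coprime (by decide), e2,
        isMultiplicative_sigma.map_mul_of_coprime (by decide)]
      have s9 : σ 1 9 = 13 := by decide
      have s25 : σ 1 25 = 31 := by decide
      have s169 : σ 1 169 = 183 := by decide
      rw [s9, s25, s169]; norm_num
    rw [hval] at hmono
    norm_num at hmono

theorem fourth_prime_bound (n : ℕ) (hn : 0 < n) (hodd : Odd n) (hsq : IsSquare n)
    (h5 : 5 ∣ n) (habund : (σ 1 n : ℚ) / n = 9 / 5) (q₄ : ℕ)
    (hq₄ : q₄ ∈ n.primeFactors) (hfourth : (n.primeFactors.filter (· < q₄)).card = 3) :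
    q₄ < Nat.nth Nat.Prime ((⌈(390 * (n.primeFactors.card : ℚ)) / 47⌉).toNat - 1) := by
  by_contra hcon
  push_neg at hcon
  have hn0 : n ≠ 0 := hn.ne'
  have h3 : ¬ 3 ∣ n := not_three_dvd n hn hodd hsq h5 habund
  have hpf : ∀ p ∈ n.primeFactors, p.Prime ∧ Odd p ∧ p ≠ 3 := by
    intro p hp
    have hp' := Nat.prime_of_mem_primeFactors hp
    have hpd := Nat.dvd_of_mem_primeFactors hp
    refine ⟨hp', ?_, ?_⟩
    · rcases hp'.eq_two_or_odd' with rfl | h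
      · exfalso
        rcases hodd with ⟨c, hc⟩
        obtain ⟨d, hd⟩ := hpd
        omega
      · exact h
    · rintro rfl; exact h3 hpd
  set w9z := n.primeFactors.card with hw9z
  set K : ℕ := (⌈(390 * (w9z : ℚ)) / 47⌉).toNat with hKdef
  set S := n.primeFactors.filter (· < q₄) with hS
  set T := n.primeFactors.filter (fun p => ¬ p < q₄) with hT
  have hq4S : q₄ ∉ S := by simp [hS]
  have hw9zge : 4 ≤ w9z := by
    have hsub : insert q₄ S ⊆ n.primeFactors := by
      apply Finset.insert_subset hq₄ (Finset.filter_subset _ _)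
    have := Finset.card_le_card hsub
    rw [Finset.card_insert_of_notMem hq4S, hfourth] at this
    exact this
  have hK1 : 1 ≤ K := by
    rw [hKdef]
    have : (1 : ℤ) ≤ ⌈(390 * (w9z : ℚ)) / 47⌉ := by
      apply Int.le_ceil_iff.mpr
      push_cast
      have : (4:ℚ) ≤ w9z := by exact_mod_cast hw9zge
      nlinarith
    omega
  have hKQ : (390 * (w9z:ℚ)) / 47 ≤ K := by
    have h1 : (0:ℤ) ≤ ⌈(390 * (w9z : ℚ)) / 47⌉ := by positivity
    have h2 := Int.le_ceil ((390 * (w9z : ℚ)) / 47)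
    have h3' : (K : ℤ) = ⌈(390 * (w9z : ℚ)) / 47⌉ := by
      rw [hKdef]; exact Int.toNat_of_nonneg h1
    have h4' : ((K : ℤ) : ℚ) = ((⌈(390 * (w9z : ℚ)) / 47⌉ : ℤ) : ℚ) := by
      exact_mod_cast congrArg (fun z : ℤ => (z : ℚ)) h3'
    push_cast at h4'
    linarith
  -- tail elements are at least K + 1
  have hTmem : ∀ p ∈ T, K + 1 ≤ p := by
    intro p hp
    rw [hT, Finset.mem_filter] at hp
    have h1 : q₄ ≤ p := by omega
    have h2 := Nat.add_two_le_nth_prime (K - 1)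
    omega
  -- cardinalities
  have hST : S.card + T.card = w9z := Finset.card_filter_add_card_filter_not _
  have hTcard : T.card = w9z - 3 := by omega
  -- the product formula
  have hnum : (σ 1 n : ℚ) = ∏ p ∈ n.primeFactors, (σ 1 (p ^ n.factorization p) : ℚ) := by
    have h1 : σ 1 n = ∏ p ∈ n.primeFactors, σ 1 (p ^ n.factorization p) := by
      rw [isMultiplicative_sigma.multiplicative_factorization _ hn0]
      rw [Finsupp.prod, Nat.support_factorization]
    rw [h1]
    push_cast
    rfl
  have hden : (n:ℚ) = ∏ p ∈ n.primeFactors, ((p:ℚ) ^ n.factorization p) := by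
    conv_lhs => rw [← Nat.factorization_prod_pow_eq_self hn0]
    rw [Finsupp.prod]
    push_cast
    rfl
  have hms : (σ 1 n : ℚ) / n =
      ∏ p ∈ n.primeFactors, (σ 1 (p ^ n.factorization p) : ℚ) / ((p:ℚ) ^ n.factorization p) := by
    rw [hnum, hden, ← Finset.prod_div_distrib]
  have hlt : ∏ p ∈ n.primeFactors, (σ 1 (p ^ n.factorization p) : ℚ) / ((p:ℚ) ^ n.factorization p)
      < ∏ p ∈ n.primeFactors, (p : ℚ) / (p - 1) := by
    apply Finset.prod_lt_prod_of_nonempty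
    · intro p hp
      exact sigma_ratio_pos (hpf p hp).1
    · intro p hp
      exact local_factor_lt (hpf p hp).1
    · exact ⟨q₄, hq₄⟩
  have hsplit : ∏ p ∈ n.primeFactors, (p : ℚ) / (p - 1)
      = (∏ p ∈ S, (p : ℚ) / (p - 1)) * (∏ p ∈ T, (p : ℚ) / (p - 1)) :=
    (Finset.prod_filter_mul_prod_filter_not _ _ _).symm
  have hSb : ∏ p ∈ S, (p : ℚ) / (p - 1) ≤ 77 / 48 :=
    small3 S hfourth (fun p hp => hpf p (Finset.filter_subset _ _ hp))
  have hTb : ∏ p ∈ T, (p : ℚ) / (p - 1) ≤ ((K : ℚ) + T.card) / K :=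
    telescope T.card T K rfl hK1 hTmem
  have hTnn : (0:ℚ) ≤ ∏ p ∈ T, (p : ℚ) / (p - 1) := by
    apply Finset.prod_nonneg
    intro p hp
    have h2 : (2:ℚ) ≤ p := by exact_mod_cast le_trans (by omega : 2 ≤ K + 1) (hTmem p hp)
    apply div_nonneg <;> linarith
  have hKpos : (0:ℚ) < K := by exact_mod_cast hK1
  have hfin : (77 / 48 : ℚ) * (((K : ℚ) + T.card) / K) ≤ 9 / 5 := by
    have hcast : (T.card : ℚ) = (w9z : ℚ) - 3 := by
      rw [hTcard, Nat.cast_sub (by omega)]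
      norm_num
    rw [hcast, ← mul_div_assoc, div_le_div_iff₀ hKpos (by norm_num)]
    have hw4 : (4:ℚ) ≤ w9z := by exact_mod_cast hw9zge
    linarith
  have hmain : (9:ℚ)/5 < 9/5 := by
    calc (9:ℚ)/5 = (σ 1 n : ℚ) / n := habund.symm
      _ = ∏ p ∈ n.primeFactors, (σ 1 (p ^ n.factorization p) : ℚ) / ((p:ℚ) ^ n.factorization p) := hms
      _ < ∏ p ∈ n.primeFactors, (p : ℚ) / (p - 1) := hlt
      _ = (∏ p ∈ S, (p : ℚ) / (p - 1)) * (∏ p ∈ T, (p : ℚ) / (p - 1)) := hsplit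
      _ ≤ (77 / 48) * (((K : ℚ) + T.card) / K) :=
          mul_le_mul hSb hTb hTnn (by norm_num)
      _ ≤ 9 / 5 := hfin
  exact lt_irrefl _ hmain
end

section
/- Let n be an odd positive integer divisible by 5 with ω(n) distinct prime divisors, and suppose the second smallest prime divisor of n is at least p_{⌈7ω(n)/3⌉}. Then σ(n)/n < 25/14; in particular σ(n)/n ≠ 9/5, so n is not a friend of 10. -/
open ArithmeticFunction
open scoped ArithmeticFunction.sigma

lemma nth_prime_lb : ∀ k, 2 * k + 1 ≤ Nat.nth Nat.Prime k := by
  have h0 : Nat.nth Nat.Prime 0 = 2 := by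
    have h : Nat.count Nat.Prime 2 = 0 := by
      simp [Nat.count_succ, Nat.not_prime_zero, Nat.not_prime_one]
    have := Nat.nth_count (p := Nat.Prime) (n := 2) (by norm_num)
    rw [h] at this; exact this
  intro k
  induction k with
  | zero => rw [h0]; omega
  | succ k ih =>
    have hlt : Nat.nth Nat.Prime k < Nat.nth Nat.Prime (k + 1) :=
      (Nat.nth_lt_nth Nat.infinite_setOf_prime).2 (Nat.lt_succ_self k)
    rcases Nat.eq_zero_or_pos k with rfl | hk
    · rw [h0] at hlt; omega
    · have h2k : Nat.nth Nat.Prime 0 < Nat.nth Nat.Prime k :=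
        (Nat.nth_lt_nth Nat.infinite_setOf_prime).2 hk
      rw [h0] at h2k
      have ho1 : Odd (Nat.nth Nat.Prime k) :=
        (Nat.prime_nth_prime k).odd_of_ne_two (by omega)
      have h2k1 : Nat.nth Nat.Prime 0 < Nat.nth Nat.Prime (k+1) :=
        (Nat.nth_lt_nth Nat.infinite_setOf_prime).2 (by omega)
      rw [h0] at h2k1
      have ho2 : Odd (Nat.nth Nat.Prime (k+1)) :=
        (Nat.prime_nth_prime (k+1)).odd_of_ne_two (by omega)
      obtain ⟨m, hm⟩ := ho1; obtain ⟨l, hl⟩ := ho2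
      omega

lemma pow_bound (x : ℚ) (t : ℕ) (hx : 0 ≤ x) (h : (t : ℚ) * x ≤ 3 / 14) :
    (1 + x) ^ t ≤ 14 / 11 := by
  rcases Nat.eq_zero_or_pos t with rfl | ht
  · norm_num
  have ht1 : (1 : ℚ) ≤ (t : ℚ) := by exact_mod_cast ht
  have hx1 : x ≤ 3 / 14 := by nlinarith
  have hb : 1 - (t : ℚ) * x ≤ (1 - x) ^ t := by
    have := one_add_mul_le_pow (a := -x) (by linarith) t
    calc 1 - (t:ℚ) * x = 1 + (t:ℚ) * (-x) := by ring
    _ ≤ (1 + -x) ^ t := this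
    _ = (1 - x) ^ t := by ring_nf
  have hsq : ((1 + x) * (1 - x)) ^ t ≤ 1 := by
    apply pow_le_one₀ <;> nlinarith
  have hp : (0 : ℚ) ≤ (1 + x) ^ t := pow_nonneg (by linarith) t
  have h1114 : (11 / 14 : ℚ) ≤ (1 - x) ^ t := by linarith
  have hkey : (1 + x) ^ t * (11 / 14) ≤ 1 := by
    calc (1 + x) ^ t * (11 / 14) ≤ (1 + x) ^ t * (1 - x) ^ t :=
          mul_le_mul_of_nonneg_left h1114 hp
    _ = ((1 + x) * (1 - x)) ^ t := (mul_pow _ _ _).symm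
    _ ≤ 1 := hsq
  linarith

lemma sigma_pp_lt (p k : ℕ) (hp : p.Prime) :
    (σ 1 (p ^ k) : ℚ) / ((p : ℚ) ^ k) < (p : ℚ) / ((p : ℚ) - 1) := by
  have hp2 : (2 : ℚ) ≤ (p : ℚ) := by exact_mod_cast hp.two_le
  have hgeom : (σ 1 (p ^ k) : ℚ) = ((p : ℚ) ^ (k + 1) - 1) / ((p : ℚ) - 1) := by
    rw [sigma_one_apply_prime_pow hp]
    push_cast
    rw [geom_sum_eq (by linarith : (p : ℚ) ≠ 1)]
  have hpk : (0 : ℚ) < (p : ℚ) ^ k := by positivity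
  have hpk1 : (0 : ℚ) < (p : ℚ) ^ (k + 1) := by positivity
  rw [hgeom, div_div, div_lt_div_iff₀ (mul_pos (by linarith) hpk) (by linarith)]
  have : (p : ℚ) ^ (k + 1) = (p : ℚ) * (p : ℚ) ^ k := by ring
  nlinarith

lemma sigma_div_eq_prod (n : ℕ) (hn : n ≠ 0) :
    (σ 1 n : ℚ) / n =
      ∏ p ∈ n.primeFactors, (σ 1 (p ^ n.factorization p) : ℚ) / ((p : ℚ) ^ n.factorization p) := by
  have h1 : σ 1 n = ∏ p ∈ n.primeFactors, σ 1 (p ^ n.factorization p) := by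
    rw [ArithmeticFunction.IsMultiplicative.multiplicative_factorization _
      ArithmeticFunction.isMultiplicative_sigma hn, Finsupp.prod, Nat.support_factorization]
  have h2 : (n : ℚ) = ∏ p ∈ n.primeFactors, (p : ℚ) ^ n.factorization p := by
    conv_lhs => rw [← Nat.factorization_prod_pow_eq_self hn]
    rw [Finsupp.prod, Nat.support_factorization]
    push_cast
    rfl
  rw [h1, h2, Nat.cast_prod, ← Finset.prod_div_distrib]

theorem not_friend_of_large_second_prime (n : ℕ) (hn : 0 < n) (hodd : Odd n)
    (h5 : 5 ∣ n) (q₂ : ℕ) (hq₂ : q₂ ∈ n.primeFactors)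
    (hsecond : (n.primeFactors.filter (· < q₂)).card = 1)
    (hbig : Nat.nth Nat.Prime ((⌈(7 * (n.primeFactors.card : ℚ)) / 3⌉).toNat - 1) ≤ q₂) :
    (σ 1 n : ℚ) / n < 25 / 14 ∧ (σ 1 n : ℚ) / n ≠ 9 / 5 := by
  have hn0 : n ≠ 0 := hn.ne'
  set S := n.primeFactors with hS
  set w := S.card with hw
  set a : ℕ := (⌈(7 * (w : ℚ)) / 3⌉).toNat - 1 with ha
  have h5S : 5 ∈ S := Nat.mem_primeFactors.2 ⟨by norm_num, h5, hn0⟩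
  -- w ≥ 2
  have hw2 : 2 ≤ w := by
    have hsub : insert q₂ (S.filter (· < q₂)) ⊆ S := by
      intro x hx
      rcases Finset.mem_insert.1 hx with rfl | hx
      · exact hq₂
      · exact Finset.mem_of_mem_filter _ hx
    have hq2nm : q₂ ∉ S.filter (· < q₂) := by
      simp [Finset.mem_filter]
    have := Finset.card_le_card hsub
    rw [Finset.card_insert_of_notMem hq2nm, hsecond] at this
    exact this
  -- arithmetic about a
  have hA : (7 * (w : ℚ)) / 3 ≤ (⌈(7 * (w : ℚ)) / 3⌉ : ℚ) := Int.le_ceil _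
  have hA5 : (5 : ℤ) ≤ ⌈(7 * (w : ℚ)) / 3⌉ := by
    have hw2' : (2 : ℚ) ≤ (w : ℚ) := by exact_mod_cast hw2
    have h4 : (4 : ℚ) < (⌈(7 * (w : ℚ)) / 3⌉ : ℚ) := by linarith
    have : (4 : ℤ) < ⌈(7 * (w : ℚ)) / 3⌉ := by exact_mod_cast h4
    omega
  have haA : (a : ℤ) = ⌈(7 * (w : ℚ)) / 3⌉ - 1 := by
    rw [ha]
    have := Int.toNat_of_nonneg (by omega : (0:ℤ) ≤ ⌈(7 * (w : ℚ)) / 3⌉)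
    omega
  have ha4 : 4 ≤ a := by omega
  have hkey : 7 * (w : ℤ) ≤ 3 * ((a : ℤ) + 1) := by
    have h7 : (7 * (w : ℚ)) ≤ 3 * (⌈(7 * (w : ℚ)) / 3⌉ : ℚ) := by linarith
    have h7' : 7 * (w : ℤ) ≤ 3 * ⌈(7 * (w : ℚ)) / 3⌉ := by exact_mod_cast h7
    omega
  -- q₂ lower bound
  have hq_lb : 2 * a + 1 ≤ q₂ := le_trans (nth_prime_lb a) hbig
  have hq5 : 5 < q₂ := by omega
  -- the filter is {5}
  have hfilter : S.filter (· < q₂) = {5} := by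
    obtain ⟨x, hx⟩ := Finset.card_eq_one.1 hsecond
    have h5f : (5 : ℕ) ∈ S.filter (· < q₂) := Finset.mem_filter.2 ⟨h5S, by simpa using hq5⟩
    rw [hx] at h5f ⊢
    rw [Finset.mem_singleton] at h5f
    rw [h5f]
  have hbigp : ∀ p ∈ S, p ≠ 5 → q₂ ≤ p := by
    intro p hp hp5
    by_contra hcon
    have : p ∈ S.filter (· < q₂) := Finset.mem_filter.2 ⟨hp, by simpa using not_le.1 hcon⟩
    rw [hfilter, Finset.mem_singleton] at this
    exact hp5 this
  -- define g
  set g : ℕ → ℚ := fun p => (σ 1 (p ^ n.factorization p) : ℚ) / ((p : ℚ) ^ n.factorization p)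
    with hg
  have hprod : (σ 1 n : ℚ) / n = ∏ p ∈ S, g p := sigma_div_eq_prod n hn0
  have gpos : ∀ p ∈ S, 0 < g p := by
    intro p hp
    have hpp : p.Prime := Nat.prime_of_mem_primeFactors hp
    have h1 : 0 < σ 1 (p ^ n.factorization p) := by
      rw [sigma_one_apply_prime_pow hpp]
      exact Finset.sum_pos (fun i _ => pow_pos hpp.pos i) (by simp)
    have : (0:ℚ) < (σ 1 (p ^ n.factorization p) : ℚ) := by exact_mod_cast h1
    apply div_pos this
    have := hpp.pos
    positivity
  -- bound for each p ≠ 5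
  have hBpos : (0:ℚ) < 1 + 1 / (2 * (a:ℚ)) := by positivity
  have hbound : ∀ p ∈ S.erase 5, g p ≤ 1 + 1 / (2 * (a : ℚ)) := by
    intro p hp
    obtain ⟨hp5, hpS⟩ := Finset.mem_erase.1 hp
    have hpp : p.Prime := Nat.prime_of_mem_primeFactors hpS
    have hpl : 2 * a + 1 ≤ p := le_trans hq_lb (hbigp p hpS hp5)
    have hpl' : 2 * (a : ℚ) + 1 ≤ (p : ℚ) := by exact_mod_cast hpl
    have ha' : (4 : ℚ) ≤ (a : ℚ) := by exact_mod_cast ha4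
    have h1 : g p < (p : ℚ) / ((p : ℚ) - 1) := sigma_pp_lt p _ hpp
    have h2 : (p : ℚ) / ((p : ℚ) - 1) ≤ 1 + 1 / (2 * (a : ℚ)) := by
      rw [div_le_iff₀ (by linarith)]
      have : 1 + 1 / (2 * (a:ℚ)) = (2 * (a:ℚ) + 1) / (2 * (a:ℚ)) := by
        field_simp
      rw [this, div_mul_eq_mul_div, le_div_iff₀ (by linarith)]
      nlinarith
    linarith
  -- product over erase
  have hcard : (S.erase 5).card = w - 1 := by rw [Finset.card_erase_of_mem h5S]
  have hprod_erase : ∏ p ∈ S.erase 5, g p ≤ (1 + 1 / (2 * (a : ℚ))) ^ (w - 1) := by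
    calc ∏ p ∈ S.erase 5, g p ≤ ∏ _p ∈ S.erase 5, (1 + 1 / (2 * (a : ℚ))) :=
          Finset.prod_le_prod (fun p hp => (gpos p (Finset.mem_of_mem_erase hp)).le)
            hbound
    _ = (1 + 1 / (2 * (a : ℚ))) ^ (w - 1) := by rw [Finset.prod_const, hcard]
  -- apply pow_bound
  have hxt : ((w - 1 : ℕ) : ℚ) * (1 / (2 * (a : ℚ))) ≤ 3 / 14 := by
    have hc : ((w - 1 : ℕ) : ℚ) = (w : ℚ) - 1 := by
      rw [Nat.cast_sub (by omega)]; norm_num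
    have ha' : (4 : ℚ) ≤ (a : ℚ) := by exact_mod_cast ha4
    have hk : 7 * (w : ℚ) ≤ 3 * ((a : ℚ) + 1) := by exact_mod_cast hkey
    rw [hc, mul_one_div, div_le_div_iff₀ (by linarith) (by norm_num)]
    linarith
  have hpow : (1 + 1 / (2 * (a : ℚ))) ^ (w - 1) ≤ 14 / 11 :=
    pow_bound _ _ (by positivity) hxt
  -- combine
  have h5fac : g 5 < 5 / 4 := by
    have := sigma_pp_lt 5 (n.factorization 5) (by norm_num)
    norm_num at this
    convert this using 2 <;> norm_num
  have herase_pos : 0 < ∏ p ∈ S.erase 5, g p :=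
    Finset.prod_pos (fun p hp => gpos p (Finset.mem_of_mem_erase hp))
  have hsplit : ∏ p ∈ S, g p = g 5 * ∏ p ∈ S.erase 5, g p :=
    (Finset.mul_prod_erase S g h5S).symm
  have hlt : (σ 1 n : ℚ) / n < 35 / 22 := by
    rw [hprod, hsplit]
    have h1 : ∏ p ∈ S.erase 5, g p ≤ 14 / 11 := le_trans hprod_erase hpow
    have h2 : g 5 * ∏ p ∈ S.erase 5, g p ≤ g 5 * (14 / 11) :=
      mul_le_mul_of_nonneg_left h1 (gpos 5 h5S).le
    have h3 : g 5 * (14 / 11 : ℚ) < (5 / 4) * (14 / 11) := by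
      apply mul_lt_mul_of_pos_right h5fac; norm_num
    calc g 5 * ∏ p ∈ S.erase 5, g p ≤ g 5 * (14/11) := h2
    _ < (5/4) * (14/11) := h3
    _ = 35 / 22 := by norm_num
  constructor
  · linarith
  · intro hcon
    rw [hcon] at hlt
    norm_num at hlt
end
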